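/- Fix k ≥ 1 and let C = (F, Init, P) be a deterministic transition system over input type I and state type S. Then P is k-inductive in C if and only if P'_k is 1-inductive in the witness system C'_k (i.e., for every initial state w of C'_k and every input i, P'_k i w holds; and for every witness state w and all inputs i0, i1, P'_k i0 w implies P'_k i1 (F'_k i0 w)). -/
import Mathlib


/-- A (deterministic) trace: `s (n+1) = F (x n) (s n)` for all `n`. -/
def IsTrace {I S : Type*} (F : I → S → S) (x : ℕ → I) (s : ℕ → S) : Prop :=
  ∀ n, s (n + 1) = F (x n) (s n)

/-- The system `(F, Init, P)` is safe: every initialized trace satisfies the property. -/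
def Safe {I S : Type*} (F : I → S → S) (Init : Set S) (P : I → S → Prop) : Prop :=
  ∀ x s, IsTrace F x s → s 0 ∈ Init → ∀ n, P (x n) (s n)

/-- `P` is `k`-inductive in `(F, Init, P)`: BMC of depth `k-1` and consecution of depth `k`. -/
def KInductive {I S : Type*} (k : ℕ) (F : I → S → S) (Init : Set S) (P : I → S → Prop) :
    Prop :=
  (∀ x s, IsTrace F x s → s 0 ∈ Init → ∀ n < k, P (x n) (s n)) ∧
  (∀ x s, IsTrace F x s → (∀ n < k, P (x n) (s n)) → P (x k) (s k))

/-- The state type of the witness system: `k` copies of the latches,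
`k-1` copies of the inputs, and `k` initialization bits. -/
abbrev WState (k : ℕ) (I S : Type*) : Type _ :=
  (Fin k → S) × (Fin (k - 1) → I) × (Fin k → Bool)

/-- The transition function of the witness system. -/
def WTrans {I S : Type*} (k : ℕ) (F : I → S → S) (i : I) (w : WState k I S) :
    WState k I S :=
  ⟨fun j => if _h : (j : ℕ) = k - 1 then F i (w.1 j) else w.1 ⟨(j : ℕ) + 1, by omega⟩,
   fun j => if _h : (j : ℕ) = k - 2 then i else w.2.1 ⟨(j : ℕ) + 1, by omega⟩,
   fun j => if _h : (j : ℕ) = k - 1 then w.2.2 j else w.2.2 ⟨(j : ℕ) + 1, by omega⟩⟩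

/-- The initial states of the witness system. -/
def WInit (k : ℕ) (hk : 0 < k) (I : Type*) {S : Type*} (Init : Set S) :
    Set (WState k I S) :=
  {w | w.1 ⟨k - 1, by omega⟩ ∈ Init ∧ w.2.2 ⟨k - 1, by omega⟩ = true ∧
       ∀ j : Fin k, (j : ℕ) < k - 1 → w.2.2 j = false}

/-- The extended input sequence `X`: `X j = x j` for `j < k - 1` and `X (k-1) = i`. -/
def WX {I : Type*} (k : ℕ) (i : I) (x : Fin (k - 1) → I) (j : Fin k) : I :=
  if h : (j : ℕ) = k - 1 then i else x ⟨(j : ℕ), by omega⟩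

/-- The property of the witness system: the conjunction of `p0`–`p4`. -/
def WProp {I S : Type*} (k : ℕ) (hk : 0 < k) (F : I → S → S) (Init : Set S)
    (P : I → S → Prop) (i : I) (w : WState k I S) : Prop :=
  (∀ j : Fin k, ∀ hj : (j : ℕ) < k - 1,
      w.2.2 j = true → w.2.2 ⟨(j : ℕ) + 1, by omega⟩ = true) ∧
  (∀ j : Fin k, ∀ hj : (j : ℕ) < k - 1,
      w.2.2 j = true → w.1 ⟨(j : ℕ) + 1, by omega⟩ = F (WX k i w.2.1 j) (w.1 j)) ∧
  (∀ j : Fin k, w.2.2 j = true → P (WX k i w.2.1 j) (w.1 j)) ∧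
  (∀ j : Fin k, 1 ≤ (j : ℕ) →
      w.2.2 ⟨(j : ℕ) - 1, by omega⟩ = false → w.2.2 j = true → w.1 j ∈ Init) ∧
  (w.2.2 ⟨k - 1, by omega⟩ = true)


private theorem fin_mk_eq {k a c : ℕ} (ha : a < k) (hc : c < k) (h : a = c) :
    (⟨a, ha⟩ : Fin k) = ⟨c, hc⟩ := by subst h; rfl

private theorem fin_app_congr {k : ℕ} {α : Sort*} (f : Fin k → α) {a c : ℕ} {ha : a < k}
    {hc : c < k} (h : a = c) : f ⟨a, ha⟩ = f ⟨c, hc⟩ := by subst h; rfl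

private def mkTrace {I S : Type*} (F : I → S → S) (x : ℕ → I) (s0 : S) : ℕ → S
  | 0 => s0
  | n + 1 => F (x n) (mkTrace F x s0 n)

private theorem mkTrace_isTrace {I S : Type*} (F : I → S → S) (x : ℕ → I) (s0 : S) :
    IsTrace F x (mkTrace F x s0) := fun _ => rfl

private theorem mkTrace_zero {I S : Type*} (F : I → S → S) (x : ℕ → I) (s0 : S) :
    mkTrace F x s0 0 = s0 := rfl

/-- `P` is `k`-inductive in `C` iff `P'_k` is `1`-inductive in the witness
system `C'_k`. -/
theorem kInductive_iff_witness_oneInductive (k : ℕ) (hk : 0 < k) {I S : Type*}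
    (F : I → S → S) (Init : Set S) (P : I → S → Prop) :
    KInductive k F Init P ↔
      ((∀ w ∈ WInit k hk I Init, ∀ i : I, WProp k hk F Init P i w) ∧
       (∀ (w : WState k I S) (i0 i1 : I),
         WProp k hk F Init P i0 w → WProp k hk F Init P i1 (WTrans k F i0 w))) := by
  classical
  constructor
  · rintro ⟨hbmc, hcons⟩
    constructor
    · -- initiation
      rintro ⟨ℓ, xs, b⟩ ⟨hinit, hb, hbf⟩ i
      refine ⟨?_, ?_, ?_, ?_, hb⟩
      · intro j hj hbj
        rw [hbf j hj] at hbj; exact absurd hbj (by simp)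
      · intro j hj hbj
        rw [hbf j hj] at hbj; exact absurd hbj (by simp)
      · intro j hbj
        have hj : (j : ℕ) = k - 1 := by
          by_contra h
          rw [hbf j (by omega)] at hbj; exact absurd hbj (by simp)
        have hje : j = ⟨k - 1, Nat.sub_lt hk Nat.one_pos⟩ := Fin.ext hj
        subst hje
        rw [WX, dif_pos (show k - 1 = k - 1 from rfl)]
        exact hbmc (fun _ => i) (mkTrace F (fun _ => i) (ℓ ⟨k - 1, by omega⟩))
          (mkTrace_isTrace _ _ _) hinit 0 hk
      · intro j h1 hprev hbj
        have hj : (j : ℕ) = k - 1 := by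
          by_contra h
          rw [hbf j (by omega)] at hbj; exact absurd hbj (by simp)
        have hje : j = ⟨k - 1, Nat.sub_lt hk Nat.one_pos⟩ := Fin.ext hj
        subst hje
        exact hinit
    · -- consecution
      rintro ⟨ℓ, xs, b⟩ i0 i1 ⟨p0, p1, p2, p3, p4⟩
      have hb1 : ∀ j : Fin k, ∀ _ : (j : ℕ) < k - 1,
          (WTrans k F i0 (ℓ, xs, b)).2.2 j = b ⟨(j : ℕ) + 1, by omega⟩ := by
        intro j hj
        simp only [WTrans]
        rw [dif_neg (show ¬((j : ℕ) = k - 1) by omega)]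
      have hbtop : (WTrans k F i0 (ℓ, xs, b)).2.2 ⟨k - 1, by omega⟩
          = b ⟨k - 1, by omega⟩ := by
        simp only [WTrans]
        rw [dif_pos trivial]
      have hl1 : ∀ j : Fin k, ∀ _ : (j : ℕ) < k - 1,
          (WTrans k F i0 (ℓ, xs, b)).1 j = ℓ ⟨(j : ℕ) + 1, by omega⟩ := by
        intro j hj
        simp only [WTrans]
        rw [dif_neg (show ¬((j : ℕ) = k - 1) by omega)]
      have hltop : (WTrans k F i0 (ℓ, xs, b)).1 ⟨k - 1, by omega⟩
          = F i0 (ℓ ⟨k - 1, by omega⟩) := by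
        simp only [WTrans]
        rw [dif_pos trivial]
      have hX : ∀ j : Fin k, ∀ _ : (j : ℕ) < k - 1,
          WX k i1 (WTrans k F i0 (ℓ, xs, b)).2.1 j = WX k i0 xs ⟨(j : ℕ) + 1, by omega⟩ := by
        intro j hj
        simp only [WTrans, WX]
        rw [dif_neg (show ¬((j : ℕ) = k - 1) by omega)]
        by_cases h2 : (j : ℕ) = k - 2
        · rw [dif_pos h2, dif_pos (show (j : ℕ) + 1 = k - 1 by omega)]
        · rw [dif_neg h2, dif_neg (show ¬((j : ℕ) + 1 = k - 1) by omega)]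
      have hXtop : WX k i1 (WTrans k F i0 (ℓ, xs, b)).2.1 ⟨k - 1, by omega⟩ = i1 := by
        rw [WX, dif_pos (show k - 1 = k - 1 from rfl)]
      refine ⟨?_, ?_, ?_, ?_, hbtop.trans p4⟩
      · -- q0
        intro j hj hbj
        rw [hb1 j hj] at hbj
        by_cases h1 : (j : ℕ) + 1 = k - 1
        · exact (fin_app_congr _ h1).trans (hbtop.trans p4)
        · exact (hb1 ⟨(j : ℕ) + 1, by omega⟩ (show (j : ℕ) + 1 < k - 1 by omega)).trans
            (p0 ⟨(j : ℕ) + 1, by omega⟩ (show (j : ℕ) + 1 < k - 1 by omega) hbj)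
      · -- q1
        intro j hj hbj
        rw [hb1 j hj] at hbj
        rw [hX j hj, hl1 j hj]
        by_cases h1 : (j : ℕ) + 1 = k - 1
        · rw [fin_mk_eq (by omega) (by omega) h1, hltop, WX,
            dif_pos (show k - 1 = k - 1 from rfl)]
        · rw [hl1 ⟨(j : ℕ) + 1, by omega⟩ (show (j : ℕ) + 1 < k - 1 by omega)]
          exact p1 ⟨(j : ℕ) + 1, by omega⟩ (show (j : ℕ) + 1 < k - 1 by omega) hbj
      · -- q2
        intro j hbj
        by_cases hj : (j : ℕ) = k - 1
        · -- the interesting case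
          have hje : j = ⟨k - 1, Nat.sub_lt hk Nat.one_pos⟩ := Fin.ext hj
          subst hje
          rw [hXtop, hltop]
          have hex : ∃ n, (if h : n < k then b ⟨n, h⟩ else true) = true :=
            ⟨k - 1, by rw [dif_pos (show k - 1 < k by omega)]; exact p4⟩
          set m := Nat.find hex with hm
          have hmle : m ≤ k - 1 :=
            Nat.find_min' hex (by rw [dif_pos (show k - 1 < k by omega)]; exact p4)
          have hmlt : m < k := by omega
          have hbm : b ⟨m, hmlt⟩ = true := by
            have := Nat.find_spec hex
            rwa [dif_pos hmlt] at this
          have hmin : ∀ n, n < m → ∀ h : n < k, b ⟨n, h⟩ = false := by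
            intro n hn h
            have := Nat.find_min hex hn
            rw [dif_pos h] at this
            simpa using this
          have mono : ∀ d, ∀ h : m + d < k, b ⟨m + d, h⟩ = true := by
            intro d
            induction d with
            | zero => intro h; exact hbm
            | succ d ih =>
              intro h
              exact p0 ⟨m + d, by omega⟩ (show m + d < k - 1 by omega) (ih (by omega))
          set xh : ℕ → I := fun n => if h : m + n < k then WX k i0 xs ⟨m + n, h⟩ else i1
            with hxh
          set sh : ℕ → S := mkTrace F xh (ℓ ⟨m, hmlt⟩) with hsh
          have htr : IsTrace F xh sh := mkTrace_isTrace _ _ _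
          have hxval : ∀ n, ∀ h : m + n < k, xh n = WX k i0 xs ⟨m + n, h⟩ := by
            intro n h
            rw [hxh]
            simp only
            rw [dif_pos h]
          have hseg : ∀ d, ∀ h : m + d < k, sh d = ℓ ⟨m + d, h⟩ := by
            intro d
            induction d with
            | zero => intro h; rw [hsh, mkTrace_zero]; exact fin_app_congr ℓ (Nat.add_zero m).symm
            | succ d ih =>
              intro h
              have hd : m + d < k := by omega
              rw [htr d, ih hd, hxval d hd]
              exact (p1 ⟨m + d, hd⟩ (show m + d < k - 1 by omega) (mono d hd)).symm
          have hslast : sh (k - m) = F i0 (ℓ ⟨k - 1, by omega⟩) := by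
            have e1 : k - m = (k - 1 - m) + 1 := by omega
            have hd : m + (k - 1 - m) < k := by omega
            rw [e1, htr (k - 1 - m), hseg (k - 1 - m) hd, hxval (k - 1 - m) hd]
            rw [fin_mk_eq hd (by omega) (show m + (k - 1 - m) = k - 1 by omega)]
            rw [WX, dif_pos (show k - 1 = k - 1 from rfl)]
          have hxlast : xh (k - m) = i1 := by
            rw [hxh]
            simp only
            rw [dif_neg (show ¬(m + (k - m) < k) by omega)]
          rw [← hxlast, ← hslast]
          rcases Nat.eq_zero_or_pos m with hm0 | hm1
          · have hkm : k - m = k := by omega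
            rw [hkm]
            refine hcons xh sh htr ?_
            intro n hn
            have hd : m + n < k := by omega
            rw [hxval n hd, hseg n hd]
            exact p2 ⟨m + n, hd⟩ (mono n hd)
          · have hInit : ℓ ⟨m, hmlt⟩ ∈ Init := by
              refine p3 ⟨m, hmlt⟩ hm1 ?_ hbm
              exact hmin (m - 1) (by omega) (by omega)
            have hs0 : sh 0 ∈ Init := by rw [hsh, mkTrace_zero]; exact hInit
            exact hbmc xh sh htr hs0 (k - m) (by omega)
        · -- shifted case
          rw [hb1 j (by omega)] at hbj
          rw [hX j (by omega), hl1 j (by omega)]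
          exact p2 ⟨(j : ℕ) + 1, by omega⟩ hbj
      · -- q3
        intro j h1 hf hbj
        by_cases hj : (j : ℕ) = k - 1
        · rw [hb1 ⟨(j : ℕ) - 1, by omega⟩ (show (j : ℕ) - 1 < k - 1 by omega)] at hf
          rw [fin_mk_eq (by omega) (by omega) (show (j : ℕ) - 1 + 1 = k - 1 by omega)] at hf
          rw [show b ⟨k - 1, Nat.sub_lt hk Nat.one_pos⟩ = true from p4] at hf
          simp at hf
        · rw [hb1 j (by omega)] at hbj
          rw [hb1 ⟨(j : ℕ) - 1, by omega⟩ (show (j : ℕ) - 1 < k - 1 by omega)] at hf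
          rw [fin_mk_eq (by omega) (by omega) (show (j : ℕ) - 1 + 1 = (j : ℕ) by omega)] at hf
          rw [hl1 j (by omega)]
          exact p3 ⟨(j : ℕ) + 1, by omega⟩ (show 1 ≤ (j : ℕ) + 1 by omega) hf hbj
  · rintro ⟨hA, hB⟩
    constructor
    · intro x s htr hinit n hn
      have main : ∀ n : ℕ, ∃ w : WState k I S,
          (∀ i, WProp k hk F Init P i w) ∧ w.1 ⟨k - 1, by omega⟩ = s n := by
        intro n
        induction n with
        | zero =>
          refine ⟨⟨fun _ => s 0, fun _ => x 0, fun j => decide ((j : ℕ) = k - 1)⟩,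
            hA _ ⟨hinit, by simp, ?_⟩, rfl⟩
          intro j hj
          simp only [decide_eq_false_iff_not]
          omega
        | succ n ih =>
          obtain ⟨w, hw, hs⟩ := ih
          refine ⟨WTrans k F (x n) w, fun i => hB w (x n) i (hw (x n)), ?_⟩
          show (WTrans k F (x n) w).1 ⟨k - 1, by omega⟩ = s (n + 1)
          simp only [WTrans]
          rw [dif_pos trivial, hs, htr n]
      obtain ⟨w, hw, hs⟩ := main n
      have h2 := (hw (x n)).2.2.1 ⟨k - 1, by omega⟩ (hw (x n)).2.2.2.2
      rw [WX, dif_pos (show k - 1 = k - 1 from rfl), hs] at h2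
      exact h2
    · intro x s htr hP
      have hw : WProp k hk F Init P (x (k - 1))
          ⟨fun j => s (j : ℕ), fun j => x (j : ℕ), fun _ => true⟩ := by
        refine ⟨fun j hj h => rfl, ?_, ?_, ?_, rfl⟩
        · intro j hj _
          rw [WX, dif_neg (show ¬((j : ℕ) = k - 1) by omega)]
          exact htr (j : ℕ)
        · intro j _
          rw [WX]
          by_cases hj : (j : ℕ) = k - 1
          · rw [dif_pos hj]
            have hpk : P (x (k - 1)) (s (k - 1)) := hP (k - 1) (by omega)
            have hje : j = ⟨k - 1, Nat.sub_lt hk Nat.one_pos⟩ := Fin.ext hj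
            subst hje
            exact hpk
          · rw [dif_neg hj]
            exact hP (j : ℕ) j.2
        · intro j h1 hf _
          exact absurd hf (by simp)
      have h2 := hB _ (x (k - 1)) (x k) hw
      have hq2 := h2.2.2.1 ⟨k - 1, by omega⟩ h2.2.2.2.2
      rw [WX, dif_pos (show k - 1 = k - 1 from rfl)] at hq2
      simp only [WTrans] at hq2
      rw [dif_pos trivial] at hq2
      have e := htr (k - 1)
      rw [show k - 1 + 1 = k by omega] at e
      rw [← e] at hq2
      exact hq2
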